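/- Let q be an odd prime power, s an odd divisor of q+1, h an integer with 1 ≤ h ≤ s-1, l = (q²-1)/s, and g a primitive element of F_{q²}. Then there exist u_0, ..., u_{h-1} ∈ F_q^* such that Σ_{k=0}^{h-1} g^{k(μl - q - 1)} u_k = 0 for every integer μ with ⌈(s-h)/2⌉ + 1 ≤ μ ≤ ⌊(s+h)/2⌋ - 1. -/

import Mathlib

open Polynomial Finset

section Main

lemma coeff_succ_aux {F : Type*} [CommRing F] (p : F[X]) (a : F) (k : ℕ) :
    (p * (X - C a)).coeff (k+1) = p.coeff k - a * p.coeff (k+1) := by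
  rw [mul_sub, coeff_sub, coeff_mul_X, mul_comm p (C a), coeff_C_mul]

lemma coeff_zero_aux {F : Type*} [CommRing F] (p : F[X]) (a : F) :
    (p * (X - C a)).coeff 0 = -(a * p.coeff 0) := by
  rw [mul_coeff_zero, coeff_sub, coeff_X_zero, coeff_C_zero]
  ring

lemma natDegree_geo {F : Type*} [CommRing F] [Nontrivial F] (ρ : ℕ → F) (n : ℕ) :
    (∏ i ∈ range n, (X - C (ρ i))).natDegree = n := by
  rw [natDegree_prod_of_monic _ _ (fun i _ => monic_X_sub_C _)]
  simp [natDegree_X]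

lemma coeff_geo_top {F : Type*} [CommRing F] [Nontrivial F] (ρ : ℕ → F) (n k : ℕ) (hk : n < k) :
    (∏ i ∈ range n, (X - C (ρ i))).coeff k = 0 :=
  coeff_eq_zero_of_natDegree_lt (by rw [natDegree_geo]; exact hk)

lemma keyH {F : Type*} [CommRing F] [Nontrivial F] (ζ t : F) :
    ∀ n k j : ℕ, k + j = n →
      ζ^(k+1) * (1 - ζ^j) * (∏ i ∈ range n, (X - C (t * ζ^i))).coeff k
        = t * ζ^n * (ζ^(k+1) - 1) * (∏ i ∈ range n, (X - C (t * ζ^i))).coeff (k+1) := by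
  intro n
  induction n with
  | zero =>
    intro k j hkj
    obtain ⟨rfl, rfl⟩ : k = 0 ∧ j = 0 := by omega
    simp [coeff_one]
  | succ n ih =>
    intro k j hkj
    rw [prod_range_succ]
    rcases k with _ | m
    · -- k = 0, j = n + 1
      have hj : j = n + 1 := by omega
      subst hj
      rw [coeff_zero_aux, coeff_succ_aux]
      have H := ih 0 n (by omega)
      simp only [pow_zero, mul_one, zero_add, pow_one] at H ⊢
      linear_combination (-t*ζ^(n+1)) * H
    · rw [coeff_succ_aux, coeff_succ_aux]
      rcases j with _ | i
      · -- k = n + 1, top case: coeff (n+2) = 0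
        have hm : m = n := by omega
        subst hm
        rw [coeff_geo_top (fun i => t * ζ^i) m (m+1) (by omega),
          coeff_geo_top (fun i => t * ζ^i) m (m+2) (by omega)]
        ring
      · -- 1 ≤ k = m+1 ≤ n, use ih at (m, i+1) and (m+1, i)
        have A := ih m (i+1) (by omega)
        have B := ih (m+1) i (by omega)
        have hn : n = m + 1 + i := by omega
        subst hn
        linear_combination ζ * A + (-(t*ζ^(m+1+i+1))) * B

lemma coeff_geo_ne_zero {F : Type*} [Field F] (ζ t : F) (ht : t ≠ 0) (hζ : ζ ≠ 0)
    (n : ℕ) (hord : ∀ j, 1 ≤ j → j ≤ n → ζ^j ≠ 1) :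
    ∀ k ≤ n, (∏ i ∈ range n, (X - C (t * ζ^i))).coeff k ≠ 0 := by
  set Q := ∏ i ∈ range n, (X - C (t * ζ^i)) with hQ
  have hlead : Q.coeff n = 1 := by
    have hm : Q.Monic := monic_prod_of_monic _ _ (fun i _ => monic_X_sub_C _)
    have := hm.coeff_natDegree
    rwa [natDegree_geo (fun i => t * ζ^i) n] at this
  have main : ∀ d, d ≤ n → Q.coeff (n - d) ≠ 0 := by
    intro d
    induction d with
    | zero => intro _; simpa [hlead] using one_ne_zero
    | succ d ihd =>
      intro hdn
      have hk1 : n - (d+1) + 1 = n - d := by omega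
      have H := keyH ζ t n (n - (d+1)) (n - (n - (d+1))) (by omega)
      rw [hk1, ← hQ] at H
      have hrhs : t * ζ^n * (ζ^(n - d) - 1) * Q.coeff (n - d) ≠ 0 := by
        refine mul_ne_zero (mul_ne_zero (mul_ne_zero ht (pow_ne_zero _ hζ)) ?_) (ihd (by omega))
        exact sub_ne_zero.mpr (hord _ (by omega) (by omega))
      intro hzero
      rw [hzero, mul_zero] at H
      exact hrhs H.symm
  intro k hk
  have := main (n - k) (by omega)
  rwa [Nat.sub_sub_self hk] at this


theorem stmt_10 (q s h : ℕ) (hq : IsPrimePow q) (hqodd : Odd q)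
    (hsodd : Odd s) (hsdvd : s ∣ q + 1)
    (hh : 1 ≤ h) (hhs : h ≤ s - 1)
    (F : Type*) [Field F] [Fintype F] (hF : Fintype.card F = q ^ 2)
    (g : Fˣ) (hg : orderOf g = q ^ 2 - 1) :
    ∃ u : ℕ → F, (∀ k < h, u k ≠ 0 ∧ (u k) ^ q = u k) ∧
      ∀ μ : ℕ, (s - h + 1) / 2 + 1 ≤ μ → μ ≤ (s + h) / 2 - 1 →
        ∑ k ∈ Finset.range h,
          ((g ^ ((k : ℤ) * ((μ : ℤ) * (((q ^ 2 - 1) / s : ℕ) : ℤ) - q - 1)) : Fˣ) : F) * u k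
            = 0 := by
  classical
  obtain ⟨p, e, hpp, he0, hpe⟩ := hq
  have hp : Nat.Prime p := hpp.nat_prime
  have hq2 := Nat.odd_iff.mp hqodd
  have hpodd : p ≠ 2 := by
    rintro rfl
    have h2q : (2:ℕ) ∣ q := by rw [← hpe]; exact dvd_pow_self 2 (by omega)
    omega
  have hq3 : 3 ≤ q := by
    have hp3 : 3 ≤ p := by have := hp.two_le; rcases Nat.lt_or_ge p 3 with h | h; · interval_cases p <;> simp_all
                           · exact h
    calc 3 ≤ p := hp3
    _ ≤ p ^ e := Nat.le_self_pow (by omega) p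
    _ = q := hpe
  have hs2 := Nat.odd_iff.mp hsodd
  have hs3 : 3 ≤ s := by omega
  have hsq : s ≤ q + 1 := Nat.le_of_dvd (by omega) hsdvd
  set N := q ^ 2 - 1 with hNdef
  have hNq : N + 1 = q ^ 2 := by
    have : 3 ≤ q^2 := by nlinarith [sq_nonneg q]
    omega
  have key : (q+1) * (q-1) = N := by
    obtain ⟨m, rfl⟩ : ∃ m, q = m + 3 := ⟨q - 3, by omega⟩
    have h1 : (m+3)^2 = m*m + 6*m + 9 := by ring
    have h2 : (m+3+1)*(m+3-1) = m*m+6*m+8 := by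
      have : m + 3 - 1 = m + 2 := by omega
      rw [this]; ring
    omega
  have hN0 : 0 < N := by
    have : 3 * 2 ≤ (q+1)*(q-1) := Nat.mul_le_mul (by omega) (by omega)
    omega
  have hq1N : (q + 1) ∣ N := ⟨q - 1, key.symm⟩
  have hsN : s ∣ N := hsdvd.trans hq1N
  set l := N / s with hldef
  have hsl : s * l = N := Nat.mul_div_cancel' hsN
  have hl0 : 0 < l := by
    rcases Nat.eq_zero_or_pos l with h0 | h0
    · rw [h0, mul_zero] at hsl; omega
    · exact h0
  obtain ⟨d, hd⟩ := hsdvd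
  have hd0 : 0 < d := by rcases Nat.eq_zero_or_pos d with h0|h0; · rw [h0, mul_zero] at hd; omega
                         · exact h0
  -- characteristic
  haveI hfact : Fact p.Prime := ⟨hp⟩
  have hcharF : CharP F p := by
    haveI := ringChar.charP F
    obtain ⟨m, hrp, hcard⟩ := FiniteField.card F (ringChar F)
    have hcard2 : ringChar F ^ (m : ℕ) = p ^ (2*e) := by
      rw [← hcard, hF, ← hpe, ← pow_mul, mul_comm e 2]
    have hrdvd : ringChar F ∣ p := by
      refine hrp.dvd_of_dvd_pow (n := 2*e) ?_
      rw [← hcard2]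
      exact dvd_pow_self _ m.pos.ne'
    have : ringChar F = p := ((Nat.prime_dvd_prime_iff_eq hrp hp).mp hrdvd)
    exact this ▸ ringChar.charP F
  haveI := hcharF
  set φ : F →+* F := iterateFrobenius F p e with hφdef
  have hφ : ∀ x : F, φ x = x ^ q := by
    intro x
    rw [hφdef, iterateFrobenius_def, hpe]
  -- order of g and congruence
  have hog : orderOf g = N := hg
  have hgcong : ∀ A B : ℤ, ((N:ℤ) ∣ B - A) → g ^ A = g ^ B := by
    intro A B hAB
    rw [zpow_eq_zpow_iff_modEq, hog]
    exact Int.modEq_iff_dvd.mpr hAB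
  have hslZ : (s:ℤ) * l = N := by exact_mod_cast hsl
  have hdZ : (q:ℤ) + 1 = s * d := by exact_mod_cast hd
  have hNZ : (N:ℤ) = (q:ℤ)^2 - 1 := by
    have : ((N:ℤ) + 1) = (q:ℤ)^2 := by exact_mod_cast hNq
    linarith
  set r : ℕ → Fˣ := fun μ => g ^ ((μ:ℤ) * l - q - 1) with hrdef
  have hconj : ∀ μ : ℕ, μ ≤ s → (r μ) ^ q = r (s - μ) := by
    intro μ hμ
    simp only [hrdef]
    rw [← zpow_natCast (g ^ ((μ:ℤ) * l - (q:ℤ) - 1)) q, ← zpow_mul]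
    apply hgcong
    have hcast : ((s - μ : ℕ) : ℤ) = (s:ℤ) - μ := by
      rw [Nat.cast_sub hμ]
    rw [hcast]
    refine ⟨2 - (d:ℤ)*μ, ?_⟩
    linear_combination (1 - (d:ℤ)*(μ:ℤ)) * hslZ - (μ:ℤ)*(l:ℤ) * hdZ - hNZ
  -- interval and its length
  set a := (s - h + 1) / 2 + 1 with hadef
  set b := (s + h) / 2 - 1 with hbdef
  set n := b + 1 - a with hndef
  have hab : a + b = s := by omega
  have hnh : n ≤ h - 1 := by omega
  have hns : n + 1 < s := by omega
  have hnodd : h % 2 = 1 → n = h - 1 := by omega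
  have hneven : h % 2 = 0 → n = h - 2 := by omega
  -- the element ζ of order s
  set ζu : Fˣ := g ^ l with hζudef
  have hlN : l ∣ N := ⟨s, by rw [mul_comm]; exact hsl.symm⟩
  have hζord : orderOf ζu = s := by
    rw [hζudef, orderOf_pow, hog, Nat.gcd_eq_right hlN, ← hsl, Nat.mul_div_cancel _ hl0]
  set tF : F := ((r a : Fˣ) : F) with htFdef
  set ζF : F := ((ζu : Fˣ) : F) with hζFdef
  have htF0 : tF ≠ 0 := Units.ne_zero _
  have hζF0 : ζF ≠ 0 := Units.ne_zero _
  have hrpow : ∀ i : ℕ, r (a + i) = r a * ζu ^ i := by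
    intro i
    simp only [hrdef, hζudef]
    rw [← zpow_natCast g l, ← zpow_natCast (g ^ (l:ℤ)) i, ← zpow_mul, ← zpow_add]
    congr 1
    push_cast
    ring
  have htζ : ∀ i : ℕ, tF * ζF ^ i = ((r (a+i) : Fˣ) : F) := by
    intro i
    rw [hrpow i]
    push_cast
    ring
  have hordζ : ∀ j : ℕ, 1 ≤ j → j ≤ n → ζF ^ j ≠ 1 := by
    intro j h1 h2 hone
    have hu : ζu ^ j = 1 := by
      ext
      push_cast
      exact hone
    have hdv := orderOf_dvd_of_pow_eq_one hu
    rw [hζord] at hdv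
    have := Nat.le_of_dvd (by omega) hdv
    omega
  -- the polynomial
  set P : F[X] := ∏ i ∈ range n, (X - C (tF * ζF ^ i)) with hPdef
  have hPdeg : P.natDegree = n := natDegree_geo _ n
  have hPmonic : P.Monic := monic_prod_of_monic _ _ (fun i _ => monic_X_sub_C _)
  have hPlead : P.coeff n = 1 := by
    have := hPmonic.coeff_natDegree
    rwa [hPdeg] at this
  have hPcoeff : ∀ k ≤ n, P.coeff k ≠ 0 :=
    coeff_geo_ne_zero ζF tF htF0 hζF0 n hordζ
  have hfrobroot : ∀ i, i < n → φ (tF * ζF ^ i) = tF * ζF ^ (n - 1 - i) := by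
    intro i hi
    rw [hφ, htζ i, htζ (n-1-i)]
    have h1 : (r (a+i))^q = r (s - (a+i)) := hconj (a+i) (by omega)
    have h2 : s - (a + i) = a + (n - 1 - i) := by omega
    rw [← Units.val_pow_eq_pow_val, h1, h2]
  have hPmap : P.map φ = P := by
    rw [hPdef, Polynomial.map_prod]
    calc ∏ i ∈ range n, ((X - C (tF * ζF ^ i)).map φ)
        = ∏ i ∈ range n, (X - C (tF * ζF ^ (n - 1 - i))) := by
          refine prod_congr rfl (fun i hi => ?_)
          rw [Polynomial.map_sub, map_X, map_C, hfrobroot i (mem_range.mp hi)]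
      _ = ∏ i ∈ range n, (X - C (tF * ζF ^ i)) :=
          prod_range_reflect (fun i => X - C (tF * ζF ^ i)) n
  have hPeval : ∀ μ : ℕ, a ≤ μ → μ ≤ b → P.eval ((r μ : Fˣ) : F) = 0 := by
    intro μ h1 h2
    rw [hPdef, eval_prod]
    apply Finset.prod_eq_zero (i := μ - a) (mem_range.mpr (by omega))
    rw [eval_sub, eval_X, eval_C, htζ (μ - a)]
    have h3 : a + (μ - a) = μ := by omega
    rw [h3, sub_self]
  -- common finishing step
  have final : ∀ PP : F[X], PP.natDegree < h → (∀ k, k < h → PP.coeff k ≠ 0) →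
      (∀ k, φ (PP.coeff k) = PP.coeff k) →
      (∀ μ : ℕ, a ≤ μ → μ ≤ b → PP.eval ((r μ : Fˣ) : F) = 0) →
      (∃ u : ℕ → F, (∀ k < h, u k ≠ 0 ∧ (u k) ^ q = u k) ∧
        ∀ μ : ℕ, a ≤ μ → μ ≤ b →
          ∑ k ∈ Finset.range h, ((g ^ ((k : ℤ) * ((μ : ℤ) * (l : ℤ) - q - 1)) : Fˣ) : F) * u k
            = 0) := by
    intro PP hd1 hc1 hfix hev
    refine ⟨fun k => PP.coeff k, fun k hk => ⟨hc1 k hk, by rw [← hφ]; exact hfix k⟩, ?_⟩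
    intro μ hμ1 hμ2
    have hsum : ∀ k ∈ range h,
        ((g ^ ((k : ℤ) * ((μ : ℤ) * (l : ℤ) - q - 1)) : Fˣ) : F) * PP.coeff k
          = PP.coeff k * ((r μ : Fˣ) : F) ^ k := by
      intro k _
      have hgz : g ^ ((k:ℤ) * ((μ:ℤ) * (l:ℤ) - q - 1)) = (r μ) ^ k := by
        simp only [hrdef]
        rw [← zpow_natCast (g ^ ((μ:ℤ) * (l:ℤ) - (q:ℤ) - 1)) k, ← zpow_mul, mul_comm]
      rw [hgz, Units.val_pow_eq_pow_val]
      ring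
    rw [Finset.sum_congr rfl hsum, ← Polynomial.eval_eq_sum_range' hd1]
    exact hev μ hμ1 hμ2
  rcases Nat.even_or_odd h with hpar | hpar
  · -- h even : multiply by an extra linear factor with constant in F_q
    have hpar2 := Nat.even_iff.mp hpar
    have hn2 : n = h - 2 := hneven hpar2
    have hnq : n < q - 1 := by omega
    set w : Fˣ := g ^ (q+1) with hwdef
    have hw : w ^ q = w := by
      simp only [hwdef]
      rw [← zpow_natCast g (q+1), ← zpow_natCast (g ^ (((q+1:ℕ)):ℤ)) q, ← zpow_mul]
      apply hgcong
      refine ⟨-1, ?_⟩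
      push_cast
      linear_combination hNZ
    have horderw : orderOf w = q - 1 := by
      rw [hwdef, orderOf_pow, hog, Nat.gcd_eq_right hq1N, ← key,
        Nat.mul_div_cancel_left _ (by omega)]
    set Cand : Finset F := (range (q-1)).image (fun i => ((w^i : Fˣ) : F)) with hCdef
    set Bad : Finset F := (range n).image (fun k => P.coeff k / P.coeff (k+1)) with hBdef
    have hCcard : Cand.card = q - 1 := by
      rw [hCdef, Finset.card_image_of_injOn, Finset.card_range]
      intro i hi j hj hij
      have : w ^ i = w ^ j := by ext; push_cast; exact hij
      exact pow_injOn_Iio_orderOf (x := w)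
        (by rw [horderw]; exact Set.mem_Iio.mpr (mem_range.mp hi))
        (by rw [horderw]; exact Set.mem_Iio.mpr (mem_range.mp hj)) this
    have hBcard : Bad.card ≤ n := by
      rw [hBdef]
      exact (Finset.card_image_le).trans (by simp)
    have hnonempty : (Cand \ Bad).Nonempty := by
      rw [← Finset.card_pos]
      have h1 := Finset.le_card_sdiff Bad Cand
      omega
    obtain ⟨c, hc⟩ := hnonempty
    rw [Finset.mem_sdiff] at hc
    obtain ⟨hcC, hcB⟩ := hc
    obtain ⟨i, hi, rfl⟩ := Finset.mem_image.mp hcC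
    set c : F := ((w^i : Fˣ) : F) with hcdef
    have hc0 : c ≠ 0 := Units.ne_zero _
    have hcq : c ^ q = c := by
      rw [hcdef, ← Units.val_pow_eq_pow_val, ← pow_mul, mul_comm i q, pow_mul, hw]
    have hcbad : ∀ k, k < n → P.coeff k - c * P.coeff (k+1) ≠ 0 := by
      intro k hk h0
      apply hcB
      rw [hBdef, Finset.mem_image]
      refine ⟨k, mem_range.mpr hk, ?_⟩
      rw [div_eq_iff (hPcoeff (k+1) (by omega))]
      rw [sub_eq_zero] at h0
      exact h0
    set PP : F[X] := P * (X - C c) with hPPdef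
    have hPne : P ≠ 0 := hPmonic.ne_zero
    have hPPdeg : PP.natDegree = n + 1 := by
      rw [hPPdef, natDegree_mul hPne (X_sub_C_ne_zero c), hPdeg, natDegree_X_sub_C]
    apply final PP (by omega)
    · intro k hk
      rcases k with _ | j
      · rw [hPPdef, coeff_zero_aux]
        exact neg_ne_zero.mpr (mul_ne_zero hc0 (hPcoeff 0 (by omega)))
      · rw [hPPdef, coeff_succ_aux]
        rcases Nat.lt_or_ge j n with hj | hj
        · exact hcbad j hj
        · have hjn : j = n := by omega
          rw [hjn, hPlead, hPdef, coeff_geo_top _ _ _ (by omega)]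
          simp
    · intro k
      have hPPmap : PP.map φ = PP := by
        rw [hPPdef, Polynomial.map_mul, hPmap, Polynomial.map_sub, map_X, map_C,
          hφ c, hcq]
      rw [← Polynomial.coeff_map, hPPmap]
    · intro μ h1 h2
      rw [hPPdef, eval_mul, hPeval μ h1 h2, zero_mul]
  · -- h odd : use P directly
    have hn1 : n = h - 1 := hnodd (Nat.odd_iff.mp hpar)
    apply final P (by omega)
    · intro k hk
      exact hPcoeff k (by omega)
    · intro k
      rw [← Polynomial.coeff_map, hPmap]
    · exact hPeval

end Main
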